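/- Let x* ∈ B_R and M > 0, and define the cone K : closure(B_R) → ℝ by K(x) := sup{ L(x) : L : ℝ^d → ℝ affine, L(x*) = −M, L ≤ 0 on ∂B_R }. Then K(x*) = −M, and every w ∈ ℝ^d with |w| ≤ M/(2R) belongs to the subdifferential ∂K(x*) := { w : K(x) ≥ K(x*) + ⟨w, x − x*⟩ for all x ∈ closure(B_R) }. Consequently the d-dimensional Lebesgue measure of ∂K(x*) is at least ω_d (M/(2R))^d, where ω_d is the Lebesgue measure of the unit ball of ℝ^d. -/

import Mathlib

open Set Metric MeasureTheory Filter
open scoped RealInnerProductSpace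

noncomputable section

/-- The convex envelope `Γ(x) = sup { L(x) : L affine, L ≤ g on closedBall 0 R }`. -/
def Gam {d : ℕ} (R : ℝ) (g : EuclideanSpace ℝ (Fin d) → ℝ)
    (x : EuclideanSpace ℝ (Fin d)) : ℝ :=
  sSup {r : ℝ | ∃ (w : EuclideanSpace ℝ (Fin d)) (c : ℝ),
    (∀ z ∈ Metric.closedBall (0 : EuclideanSpace ℝ (Fin d)) R, ⟪w, z⟫ + c ≤ g z) ∧
      r = ⟪w, x⟫ + c}

/-- The subdifferential of a function `Γ` on `closedBall 0 R` at a point `y`: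
`∂Γ(y) = { w : Γ(x) ≥ Γ(y) + ⟨w, x − y⟩ for all x ∈ closedBall 0 R }`. -/
def subdiffAt {d : ℕ} (R : ℝ) (Γ : EuclideanSpace ℝ (Fin d) → ℝ)
    (y : EuclideanSpace ℝ (Fin d)) : Set (EuclideanSpace ℝ (Fin d)) :=
  { w | ∀ x ∈ Metric.closedBall (0 : EuclideanSpace ℝ (Fin d)) R,
      Γ y + ⟪w, x - y⟫ ≤ Γ x }

/-- The cone `K(x) = sup { L(x) : L affine, L(x*) = −M, L ≤ 0 on ∂B_R }`. -/
def coneK {d : ℕ} (R M : ℝ) (xstar : EuclideanSpace ℝ (Fin d))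
    (x : EuclideanSpace ℝ (Fin d)) : ℝ :=
  sSup {r : ℝ | ∃ (w : EuclideanSpace ℝ (Fin d)) (c : ℝ),
    (⟪w, xstar⟫ + c = -M) ∧
    (∀ z : EuclideanSpace ℝ (Fin d), ‖z‖ = R → ⟪w, z⟫ + c ≤ 0) ∧
      r = ⟪w, x⟫ + c}

/-- **Subdifferential of the cone.** The cone `K` with vertex value `−M` at `x* ∈ B_R` and
vanishing on `∂B_R` satisfies `K(x*) = −M`, every `w` with `|w| ≤ M/(2R)` lies in `∂K(x*)`,
and hence `|∂K(x*)| ≥ ω_d (M/(2R))^d`. -/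
theorem stmt_10 (d : ℕ) (hd : 1 ≤ d) (R : ℝ) (hR : 0 < R)
    (M : ℝ) (hM : 0 < M)
    (xstar : EuclideanSpace ℝ (Fin d))
    (hxstar : xstar ∈ Metric.ball (0 : EuclideanSpace ℝ (Fin d)) R) :
    coneK R M xstar xstar = -M ∧
    (∀ w : EuclideanSpace ℝ (Fin d), ‖w‖ ≤ M / (2 * R) →
      w ∈ subdiffAt R (coneK R M xstar) xstar) ∧
    volume (Metric.ball (0 : EuclideanSpace ℝ (Fin d)) 1) *
        ENNReal.ofReal ((M / (2 * R)) ^ d)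
      ≤ volume (subdiffAt R (coneK R M xstar) xstar) := by
  have hx : ‖xstar‖ < R := by simpa [mem_ball_zero_iff] using hxstar
  set S : EuclideanSpace ℝ (Fin d) → Set ℝ := fun x =>
    {r : ℝ | ∃ (w : EuclideanSpace ℝ (Fin d)) (c : ℝ),
      (⟪w, xstar⟫ + c = -M) ∧
      (∀ z : EuclideanSpace ℝ (Fin d), ‖z‖ = R → ⟪w, z⟫ + c ≤ 0) ∧
        r = ⟪w, x⟫ + c} with hSdef
  have hcone : ∀ x, coneK R M xstar x = sSup (S x) := fun x => rfl
  -- a unit vector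
  obtain ⟨e, he⟩ : ∃ e : EuclideanSpace ℝ (Fin d), ‖e‖ = 1 :=
    ⟨EuclideanSpace.single ⟨0, hd⟩ 1, by simp⟩
  -- membership of the trivial affine function
  have hmemM : ∀ x, (-M : ℝ) ∈ S x := by
    intro x
    refine ⟨0, -M, by simp, fun z hz => by simp [hM.le], by simp⟩
  have hne : ∀ x, (S x).Nonempty := fun x => ⟨-M, hmemM x⟩
  have hbdd : ∀ x : EuclideanSpace ℝ (Fin d), ‖x‖ ≤ R → BddAbove (S x) := by
    intro x hxR
    refine ⟨0, ?_⟩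
    rintro r ⟨w, c, hvx, hsp, rfl⟩
    have hnRe : ‖R • e‖ = R := by
      rw [norm_smul, he]; simp [abs_of_pos hR]
    have hz1 := hsp (R • e) hnRe
    have hz2 := hsp (-(R • e)) (by rw [norm_neg]; exact hnRe)
    have hneg : ⟪w, -(R • e)⟫ = -⟪w, R • e⟫ := inner_neg_right _ _
    have hc : c ≤ 0 := by rw [hneg] at hz2; linarith
    rcases eq_or_ne x 0 with h0 | h0
    · simp [h0]; linarith [inner_zero_right (𝕜 := ℝ) w]
      -- fallback below if simp closes differently
    · have hxn : 0 < ‖x‖ := norm_pos_iff.mpr h0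
      have hnz : ‖(R / ‖x‖) • x‖ = R := by
        rw [norm_smul, Real.norm_eq_abs, abs_of_pos (by positivity : (0:ℝ) < R / ‖x‖)]
        field_simp
      have hz := hsp ((R / ‖x‖) • x) hnz
      rw [real_inner_smul_right] at hz
      -- hz : (R/‖x‖) * ⟪w,x⟫ + c ≤ 0
      have h1 : (‖x‖ / R) * ((R / ‖x‖) * ⟪w, x⟫ + c) ≤ 0 :=
        mul_nonpos_of_nonneg_of_nonpos (by positivity) hz
      have h2 : (‖x‖ / R) * ((R / ‖x‖) * ⟪w, x⟫) = ⟪w, x⟫ := by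
        field_simp
      have h3 : ⟪w, x⟫ ≤ -(‖x‖ / R) * c := by nlinarith [h1, h2]
      have h4 : (‖x‖ / R) ≤ 1 := by
        rw [div_le_one hR]; exact hxR
      nlinarith [h3, h4, hc]
  have h1 : coneK R M xstar xstar = -M := by
    rw [hcone]
    apply le_antisymm
    · apply csSup_le (hne xstar)
      rintro r ⟨w, c, hvx, _, rfl⟩
      exact hvx.le
    · exact le_csSup (hbdd xstar hx.le) (hmemM xstar)
  have h2 : ∀ w : EuclideanSpace ℝ (Fin d), ‖w‖ ≤ M / (2 * R) →
      w ∈ subdiffAt R (coneK R M xstar) xstar := by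
    intro w hw x hxmem
    rw [h1, hcone]
    have hxR : ‖x‖ ≤ R := by simpa [mem_closedBall_zero_iff] using hxmem
    refine le_csSup (hbdd x hxR) ?_
    refine ⟨w, -M - ⟪w, xstar⟫, by ring, ?_, ?_⟩
    · intro z hz
      have ha : ⟪w, z⟫ ≤ ‖w‖ * R := by
        have := real_inner_le_norm w z
        rwa [hz] at this
      have hb : -⟪w, xstar⟫ ≤ ‖w‖ * R := by
        have h' := abs_real_inner_le_norm w xstar
        have h'' : ‖w‖ * ‖xstar‖ ≤ ‖w‖ * R :=
          mul_le_mul_of_nonneg_left hx.le (norm_nonneg w)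
        have := neg_abs_le ⟪w, xstar⟫
        linarith
      have hwR : ‖w‖ * (2 * R) ≤ M := by
        rw [← le_div_iff₀ (by positivity : (0:ℝ) < 2 * R)]
        exact hw
      linarith
    · rw [inner_sub_right]; ring
  refine ⟨h1, h2, ?_⟩
  have hρ : (0:ℝ) ≤ M / (2 * R) := by positivity
  have hsub : Metric.ball (0 : EuclideanSpace ℝ (Fin d)) (M / (2 * R)) ⊆
      subdiffAt R (coneK R M xstar) xstar := by
    intro w hw
    exact h2 w (mem_ball_zero_iff.mp hw).le
  have hent : e ≠ 0 := by
    intro h; rw [h, norm_zero] at he; norm_num at he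
  haveI : Nontrivial (EuclideanSpace ℝ (Fin d)) := nontrivial_of_ne e 0 hent
  calc volume (Metric.ball (0 : EuclideanSpace ℝ (Fin d)) 1) *
        ENNReal.ofReal ((M / (2 * R)) ^ d)
      = volume (Metric.ball (0 : EuclideanSpace ℝ (Fin d)) (M / (2 * R))) := by
        rw [Measure.addHaar_ball _ _ hρ, finrank_euclideanSpace_fin, mul_comm]
    _ ≤ volume (subdiffAt R (coneK R M xstar) xstar) := measure_mono hsub

end
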